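/- Let ρ and ρ* be CQ states on alphabet X, Π = Σ_{x∈S}|x⟩⟨x| with p = Tr(ΠρΠ) > 0 and p* = Tr(Πρ*Π) > 0, and define the normalized projected states τ = p⁻¹ΠρΠ and τ* = p*⁻¹Πρ*Π. Then D(τ, τ*) ≤ 2 p⁻¹ D(ρ, ρ*). In particular, if D(ρ,ρ*) ≤ p ε²/4 then D(τ,τ*) ≤ ε²/2. -/

import Mathlib

open Matrix Kronecker
open scoped BigOperators ComplexOrder

/-- |M| = √(M†M) for a square complex matrix. -/
noncomputable def matAbs {n : Type*} [Fintype n] [DecidableEq n] (M : Matrix n n ℂ) :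
    Matrix n n ℂ :=
  ((Matrix.posSemidef_conjTranspose_mul_self M).1.eigenvectorUnitary : Matrix n n ℂ) *
    diagonal (fun i => ((Real.sqrt ((Matrix.posSemidef_conjTranspose_mul_self M).1.eigenvalues i) : ℝ) : ℂ)) *
    (star (Matrix.posSemidef_conjTranspose_mul_self M).1.eigenvectorUnitary : Matrix n n ℂ)

/-- Trace distance D(A,B) = (1/2) Tr |A - B|. -/
noncomputable def traceDist {n : Type*} [Fintype n] [DecidableEq n]
    (A B : Matrix n n ℂ) : ℝ :=
  (matAbs (A - B)).trace.re / 2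

/-- A density operator: positive semidefinite with unit trace. -/
def IsDensity {n : Type*} [Fintype n] [DecidableEq n] (ρ : Matrix n n ℂ) : Prop :=
  ρ.PosSemidef ∧ ρ.trace = 1

/-- The CQ state Σ_x P(x) |x⟩⟨x| ⊗ ω(x). -/
noncomputable def cqState {X E : Type*} [Fintype X] [DecidableEq X] [Fintype E] [DecidableEq E]
    (P : X → ℝ) (ω : X → Matrix E E ℂ) : Matrix (X × E) (X × E) ℂ :=
  ∑ x, (P x : ℂ) • (Matrix.single x x (1 : ℂ) ⊗ₖ ω x)

/-- The projector Π = Σ_{x∈S} |x⟩⟨x| ⊗ 1_E. -/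
noncomputable def cqProj {X E : Type*} [Fintype X] [DecidableEq X] [Fintype E] [DecidableEq E]
    (S : Finset X) : Matrix (X × E) (X × E) ℂ :=
  ∑ x ∈ S, Matrix.single x x (1 : ℂ) ⊗ₖ (1 : Matrix E E ℂ)

set_option linter.unusedSectionVars false
set_option linter.unusedVariables false
set_option maxHeartbeats 1000000

section TrNorm
variable {n : Type*} [Fintype n] [DecidableEq n]

noncomputable def trNorm (M : Matrix n n ℂ) : ℝ := (matAbs M).trace.re

open scoped MatrixOrder in
lemma matAbs_sqrt (M : Matrix n n ℂ) : matAbs M = CFC.sqrt (Mᴴ * M) := by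
  have h0 : (0 : Matrix n n ℂ) ≤ Mᴴ * M :=
    nonneg_iff_posSemidef.mpr (posSemidef_conjTranspose_mul_self M)
  rw [CFC.sqrt_eq_real_sqrt _ h0, cfcₙ_eq_cfc, (posSemidef_conjTranspose_mul_self M).1.cfc_eq,
    IsHermitian.cfc, Unitary.conjStarAlgAut_apply]
  simp [matAbs, Function.comp_def]

open scoped MatrixOrder in
lemma matAbs_posSemidef (M : Matrix n n ℂ) : (matAbs M).PosSemidef := by
  rw [matAbs_sqrt]; exact nonneg_iff_posSemidef.mp (CFC.sqrt_nonneg _)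

open scoped MatrixOrder in
lemma matAbs_sq (M : Matrix n n ℂ) : matAbs M ^ 2 = Mᴴ * M := by
  rw [matAbs_sqrt]
  exact CFC.sq_sqrt _ (nonneg_iff_posSemidef.mpr (posSemidef_conjTranspose_mul_self M))

open scoped MatrixOrder in
lemma matAbs_eq {M N : Matrix n n ℂ} (hN : N.PosSemidef) (h : N ^ 2 = Mᴴ * M) :
    matAbs M = N :=
  by
    rw [matAbs_sqrt]
    exact CFC.sqrt_unique (by rw [← h, sq]) (nonneg_iff_posSemidef.mpr hN)

lemma matAbs_of_posSemidef {M : Matrix n n ℂ} (hM : M.PosSemidef) : matAbs M = M :=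
  matAbs_eq hM (by rw [pow_two, hM.isHermitian.eq])

lemma trNorm_of_posSemidef {M : Matrix n n ℂ} (hM : M.PosSemidef) :
    trNorm M = M.trace.re := by rw [trNorm, matAbs_of_posSemidef hM]

lemma conj_diag_mul {U : Matrix n n ℂ} (hUU : star U * U = 1) (d e : n → ℂ) :
    (U * diagonal d * star U) * (U * diagonal e * star U)
      = U * diagonal (fun i => d i * e i) * star U := by
  have cancel : ∀ X : Matrix n n ℂ, star U * (U * X) = X := fun X => by
    rw [← mul_assoc, hUU, one_mul]
  simp only [Matrix.mul_assoc]
  rw [cancel, ← Matrix.mul_assoc (diagonal d), diagonal_mul_diagonal]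

lemma matAbs_hermitian {M : Matrix n n ℂ} (hM : M.IsHermitian) :
    matAbs M = (hM.eigenvectorUnitary : Matrix n n ℂ)
      * diagonal (fun i => ((|hM.eigenvalues i| : ℝ) : ℂ))
      * star (hM.eigenvectorUnitary : Matrix n n ℂ) := by
  set U : Matrix n n ℂ := (hM.eigenvectorUnitary : Matrix n n ℂ) with hU
  have hUU : star U * U = 1 := Unitary.coe_star_mul_self hM.eigenvectorUnitary
  apply matAbs_eq
  · rw [Matrix.star_eq_conjTranspose]
    refine Matrix.PosSemidef.mul_mul_conjTranspose_same ?_ U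
    exact Matrix.posSemidef_diagonal_iff.mpr fun i => by
      simpa using Complex.zero_le_real.mpr (abs_nonneg _)
  · rw [pow_two, conj_diag_mul hUU, hM.eq]
    have h1 : M = U * diagonal (fun i => ((hM.eigenvalues i : ℝ) : ℂ)) * star U :=
      hM.spectral_theorem
    have habs : (fun i => ((|hM.eigenvalues i| : ℝ) : ℂ) * ((|hM.eigenvalues i| : ℝ) : ℂ))
        = fun i => ((hM.eigenvalues i : ℝ) : ℂ) * ((hM.eigenvalues i : ℝ) : ℂ) := by
      funext i
      rw [← Complex.ofReal_mul, ← Complex.ofReal_mul, abs_mul_abs_self]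
    rw [habs, ← conj_diag_mul hUU, ← h1]

lemma trNorm_hermitian {M : Matrix n n ℂ} (hM : M.IsHermitian) :
    trNorm M = ∑ i, |hM.eigenvalues i| := by
  set U : Matrix n n ℂ := (hM.eigenvectorUnitary : Matrix n n ℂ) with hU
  have hUU : star U * U = 1 := Unitary.coe_star_mul_self hM.eigenvectorUnitary
  rw [trNorm, matAbs_hermitian hM, trace_mul_cycle, ← hU, hUU, one_mul, trace_diagonal]
  rw [Complex.re_sum]
  simp

lemma trNorm_nonneg_of_hermitian {M : Matrix n n ℂ} (hM : M.IsHermitian) : 0 ≤ trNorm M := by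
  rw [trNorm_hermitian hM]
  exact Finset.sum_nonneg fun i _ => abs_nonneg _

def Contr (C : Matrix n n ℂ) : Prop :=
  ∀ v : n → ℂ, ‖star v ⬝ᵥ C *ᵥ v‖ ≤ (star v ⬝ᵥ v).re

lemma qf_conj (A B : Matrix n n ℂ) (v : n → ℂ) :
    star v ⬝ᵥ (A * B * star A) *ᵥ v
      = star (star A *ᵥ v) ⬝ᵥ B *ᵥ (star A *ᵥ v) := by
  simp only [star_mulVec, Matrix.star_eq_conjTranspose, conjTranspose_conjTranspose,
    mulVec_mulVec, dotProduct_mulVec, vecMul_vecMul, Matrix.mul_assoc]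

lemma star_dot_conj (A : Matrix n n ℂ) (v : n → ℂ) :
    star (A *ᵥ v) ⬝ᵥ (A *ᵥ v) = star v ⬝ᵥ (star A * A) *ᵥ v := by
  simp only [star_mulVec, Matrix.star_eq_conjTranspose, conjTranspose_conjTranspose,
    mulVec_mulVec, dotProduct_mulVec, vecMul_vecMul, Matrix.mul_assoc]

lemma re_star_dot (v : n → ℂ) : (star v ⬝ᵥ v).re = ∑ i, ‖v i‖ ^ 2 := by
  simp [dotProduct, Complex.re_sum, Pi.star_apply, ← Complex.normSq_eq_norm_sq,
    Complex.normSq_apply, Complex.mul_re, Complex.conj_re, Complex.conj_im]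

lemma entry_eq_qf (A : Matrix n n ℂ) (i : n) :
    A i i = star (Pi.single i 1) ⬝ᵥ A *ᵥ (Pi.single i 1 : n → ℂ) := by
  simp [dotProduct, mulVec_single, Pi.single_apply, apply_ite, Finset.sum_ite_eq,
    Finset.mem_univ, mul_comm]

lemma single_dot {i : n} : (star (Pi.single i 1 : n → ℂ)) ⬝ᵥ (Pi.single i 1 : n → ℂ) = 1 := by
  simp [dotProduct, Pi.single_apply, apply_ite]

lemma contr_conj_diag {U : Matrix n n ℂ} (hUU : star U * U = 1) (hU2 : U * star U = 1)
    {d : n → ℂ} (hd : ∀ i, ‖d i‖ ≤ 1) :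
    Contr (U * diagonal d * star U) := by
  intro v
  rw [qf_conj]
  set w := star U *ᵥ v with hw
  have hww : (star w ⬝ᵥ w).re = (star v ⬝ᵥ v).re := by
    rw [hw, star_dot_conj, star_star, hU2, one_mulVec]
  calc ‖star w ⬝ᵥ diagonal d *ᵥ w‖
      = ‖∑ i, star (w i) * (d i * w i)‖ := by
        simp [dotProduct, mulVec_diagonal]
    _ ≤ ∑ i, ‖star (w i) * (d i * w i)‖ := norm_sum_le _ _
    _ ≤ ∑ i, ‖w i‖ ^ 2 := by
        refine Finset.sum_le_sum fun i _ => ?_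
        rw [norm_mul, norm_mul, RCLike.star_def, Complex.norm_conj]
        have h1 := hd i
        have h2 := norm_nonneg (w i)
        have h3 := norm_nonneg (d i)
        nlinarith
    _ = (star w ⬝ᵥ w).re := (re_star_dot w).symm
    _ = (star v ⬝ᵥ v).re := hww

lemma trace_mul_diag (A : Matrix n n ℂ) (d : n → ℂ) :
    (A * diagonal d).trace = ∑ i, A i i * d i := by
  simp [Matrix.trace, Matrix.diag, mul_apply, diagonal_apply, Finset.sum_ite_eq,
    Finset.mem_univ]

lemma conj_entry_abs_le {U C : Matrix n n ℂ} (hUU : star U * U = 1)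
    (hC : Contr C) (i : n) : ‖(star U * C * U) i i‖ ≤ 1 := by
  have h1 : (star U * C * U) i i
      = star (U *ᵥ Pi.single i 1) ⬝ᵥ C *ᵥ (U *ᵥ Pi.single i 1) := by
    rw [entry_eq_qf (star U * C * U) i]
    have := qf_conj (star U) C (Pi.single i 1)
    rwa [star_star] at this
  have h2 : (star (U *ᵥ (Pi.single i 1 : n → ℂ)) ⬝ᵥ (U *ᵥ Pi.single i 1)).re = 1 := by
    rw [star_dot_conj, hUU, one_mulVec, single_dot]
    simp
  rw [h1]
  calc ‖_‖ ≤ _ := hC (U *ᵥ Pi.single i 1)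
    _ = 1 := h2

lemma herm_trace_mul {M : Matrix n n ℂ} (hM : M.IsHermitian) (C : Matrix n n ℂ) :
    (M * C).trace = ∑ i, (star (hM.eigenvectorUnitary : Matrix n n ℂ) * C *
      (hM.eigenvectorUnitary : Matrix n n ℂ)) i i * ((hM.eigenvalues i : ℝ) : ℂ) := by
  set U : Matrix n n ℂ := (hM.eigenvectorUnitary : Matrix n n ℂ) with hU
  have hspec : M = U * diagonal (fun i => ((hM.eigenvalues i : ℝ) : ℂ)) * star U :=
    hM.spectral_theorem
  conv_lhs => rw [hspec]
  rw [Matrix.mul_assoc (U * diagonal _), trace_mul_comm,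
    ← Matrix.mul_assoc (star U * C), ← trace_mul_diag]

lemma abs_trace_mul_le {M : Matrix n n ℂ} (hM : M.IsHermitian) {C : Matrix n n ℂ}
    (hC : Contr C) : ‖(M * C).trace‖ ≤ trNorm M := by
  set U : Matrix n n ℂ := (hM.eigenvectorUnitary : Matrix n n ℂ) with hU
  have hUU : star U * U = 1 := Unitary.coe_star_mul_self hM.eigenvectorUnitary
  rw [herm_trace_mul hM C, trNorm_hermitian hM]
  calc ‖∑ i, (star U * C * U) i i * ((hM.eigenvalues i : ℝ) : ℂ)‖
      ≤ ∑ i, ‖(star U * C * U) i i * ((hM.eigenvalues i : ℝ) : ℂ)‖ :=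
        norm_sum_le _ _
    _ ≤ ∑ i, |hM.eigenvalues i| := by
        refine Finset.sum_le_sum fun i _ => ?_
        rw [norm_mul, Complex.norm_real, Real.norm_eq_abs]
        have h1 := conj_entry_abs_le hUU hC i
        have h2 := norm_nonneg ((star U * C * U) i i)
        nlinarith [abs_nonneg (hM.eigenvalues i)]

lemma exists_contr_trace {M : Matrix n n ℂ} (hM : M.IsHermitian) :
    ∃ C : Matrix n n ℂ, Contr C ∧ (M * C).trace = ((trNorm M : ℝ) : ℂ) := by
  set U : Matrix n n ℂ := (hM.eigenvectorUnitary : Matrix n n ℂ) with hU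
  have hUU : star U * U = 1 := Unitary.coe_star_mul_self hM.eigenvectorUnitary
  have hU2 : U * star U = 1 := Unitary.coe_mul_star_self hM.eigenvectorUnitary
  refine ⟨U * diagonal (fun i => if 0 ≤ hM.eigenvalues i then 1 else -1) * star U, ?_, ?_⟩
  · refine contr_conj_diag hUU hU2 fun i => ?_
    split <;> simp
  · rw [herm_trace_mul hM, trNorm_hermitian hM]
    have hcanc : star U * (U * diagonal (fun i => if 0 ≤ hM.eigenvalues i then (1:ℂ) else -1)
        * star U) * U = diagonal (fun i => if 0 ≤ hM.eigenvalues i then (1:ℂ) else -1) := by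
      simp only [← Matrix.mul_assoc]
      rw [hUU, one_mul, Matrix.mul_assoc, hUU, mul_one]
    rw [hcanc]
    push_cast
    refine Finset.sum_congr rfl fun i _ => ?_
    rw [diagonal_apply_eq]
    split_ifs with h
    · rw [abs_of_nonneg h]; ring
    · rw [abs_of_neg (not_le.mp h)]; push_cast; ring

lemma trNorm_add_le {A B : Matrix n n ℂ} (hA : A.IsHermitian) (hB : B.IsHermitian) :
    trNorm (A + B) ≤ trNorm A + trNorm B := by
  obtain ⟨C, hC, htr⟩ := exists_contr_trace (hA.add hB)
  have h1 : trNorm (A + B) = ((A + B) * C).trace.re := by rw [htr]; simp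
  have h2 : ((A * C).trace.re ≤ trNorm A) :=
    le_trans (Complex.re_le_norm _) (abs_trace_mul_le hA hC)
  have h3 : ((B * C).trace.re ≤ trNorm B) :=
    le_trans (Complex.re_le_norm _) (abs_trace_mul_le hB hC)
  rw [h1, add_mul, trace_add, Complex.add_re]
  linarith

lemma proj_qf_re_le {Q : Matrix n n ℂ} (hH : star Q = Q) (h2 : Q * Q = Q) (v : n → ℂ) :
    0 ≤ star v ⬝ᵥ Q *ᵥ v ∧ (star v ⬝ᵥ Q *ᵥ v).re ≤ (star v ⬝ᵥ v).re := by
  have e1 : star v ⬝ᵥ Q *ᵥ v = star (Q *ᵥ v) ⬝ᵥ (Q *ᵥ v) := by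
    rw [star_dot_conj, hH, h2]
  have h0 : 0 ≤ star v ⬝ᵥ Q *ᵥ v := e1 ▸ dotProduct_star_self_nonneg _
  refine ⟨h0, ?_⟩
  have hQ1 : star (1 - Q) = 1 - Q := by rw [star_sub, star_one, hH]
  have h21 : (1 - Q) * (1 - Q) = 1 - Q := by
    have hexp : (1 - Q) * (1 - Q) = 1 - Q - Q + Q * Q := by noncomm_ring
    rw [hexp, h2]
    abel
  have e2 : star v ⬝ᵥ (1 - Q) *ᵥ v = star ((1 - Q) *ᵥ v) ⬝ᵥ ((1 - Q) *ᵥ v) := by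
    rw [star_dot_conj, hQ1, h21]
  have h0' : 0 ≤ star v ⬝ᵥ (1 - Q) *ᵥ v := e2 ▸ dotProduct_star_self_nonneg _
  have hre := (Complex.nonneg_iff.mp h0').1
  have hsplit : (star v ⬝ᵥ (1 - Q) *ᵥ v).re
      = (star v ⬝ᵥ v).re - (star v ⬝ᵥ Q *ᵥ v).re := by
    rw [sub_mulVec, one_mulVec, dotProduct_sub, Complex.sub_re]
  linarith

lemma contr_proj {Q : Matrix n n ℂ} (hH : star Q = Q) (h2 : Q * Q = Q) : Contr Q := by
  intro v
  obtain ⟨h0, hle⟩ := proj_qf_re_le hH h2 v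
  rw [← Complex.re_eq_norm.mpr h0]
  exact hle

lemma contr_proj_conj {Q : Matrix n n ℂ} (hH : star Q = Q) (h2 : Q * Q = Q)
    {C : Matrix n n ℂ} (hC : Contr C) : Contr (Q * C * Q) := by
  intro v
  have hq := qf_conj Q C v
  rw [hH] at hq
  rw [hq]
  have key : (star (Q *ᵥ v) ⬝ᵥ (Q *ᵥ v)).re ≤ (star v ⬝ᵥ v).re := by
    have e1 : star (Q *ᵥ v) ⬝ᵥ (Q *ᵥ v) = star v ⬝ᵥ Q *ᵥ v := by
      rw [star_dot_conj, hH, h2]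
    rw [e1]
    exact (proj_qf_re_le hH h2 v).2
  exact le_trans (hC (Q *ᵥ v)) key

lemma isHermitian_proj_conj {M Q : Matrix n n ℂ} (hM : M.IsHermitian) (hH : star Q = Q) :
    (Q * M * Q).IsHermitian := by
  have hH' : Qᴴ = Q := by rw [← Matrix.star_eq_conjTranspose]; exact hH
  show (Q * M * Q)ᴴ = _
  rw [conjTranspose_mul, conjTranspose_mul, hH', hM.eq, Matrix.mul_assoc]

lemma trNorm_proj_conj_le {M Q : Matrix n n ℂ} (hM : M.IsHermitian)
    (hH : star Q = Q) (h2 : Q * Q = Q) : trNorm (Q * M * Q) ≤ trNorm M := by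
  have hH' : Qᴴ = Q := by rw [← Matrix.star_eq_conjTranspose]; exact hH
  have hQMQ : (Q * M * Q).IsHermitian := by
    show (Q * M * Q)ᴴ = _
    rw [conjTranspose_mul, conjTranspose_mul, hH', hM.eq, Matrix.mul_assoc]
  obtain ⟨C, hC, htr⟩ := exists_contr_trace hQMQ
  have h1 : trNorm (Q * M * Q) = ((Q * M * Q) * C).trace.re := by rw [htr]; simp
  have hcyc : ((Q * M * Q) * C).trace = (M * (Q * C * Q)).trace := by
    rw [Matrix.mul_assoc (Q * M) Q C, trace_mul_comm, ← Matrix.mul_assoc (Q * C) Q M,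
      trace_mul_comm]
  rw [h1, hcyc]
  exact le_trans (Complex.re_le_norm _) (abs_trace_mul_le hM (contr_proj_conj hH h2 hC))

lemma matAbs_real_smul (c : ℝ) (M : Matrix n n ℂ) :
    matAbs ((c : ℂ) • M) = ((|c| : ℝ) : ℂ) • matAbs M := by
  have hAbs : (matAbs M).PosSemidef :=
    matAbs_posSemidef M
  have hsq : matAbs M ^ 2 = Mᴴ * M :=
    matAbs_sq M
  apply matAbs_eq
  · refine Matrix.PosSemidef.of_dotProduct_mulVec_nonneg ?_ ?_
    · show (((|c| : ℝ) : ℂ) • matAbs M)ᴴ = _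
      rw [conjTranspose_smul, hAbs.isHermitian.eq]
      congr 1
      simp [Complex.star_def, Complex.conj_ofReal]
    · intro v
      rw [smul_mulVec, dotProduct_smul]
      exact smul_nonneg (Complex.zero_le_real.mpr (abs_nonneg _)) (hAbs.dotProduct_mulVec_nonneg v)
  · rw [smul_pow, hsq, conjTranspose_smul, Matrix.smul_mul, Matrix.mul_smul, smul_smul]
    congr 1
    rw [Complex.star_def, Complex.conj_ofReal, ← Complex.ofReal_pow, ← Complex.ofReal_mul,
      sq_abs, sq]

lemma trNorm_real_smul (c : ℝ) (M : Matrix n n ℂ) :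
    trNorm ((c : ℂ) • M) = |c| * trNorm M := by
  rw [trNorm, matAbs_real_smul, trace_smul, trNorm]
  rw [smul_eq_mul, Complex.re_ofReal_mul]

lemma hermitian_real_smul (c : ℝ) {M : Matrix n n ℂ} (hM : M.IsHermitian) :
    ((c : ℂ) • M).IsHermitian := by
  show ((c : ℂ) • M)ᴴ = _
  rw [conjTranspose_smul, hM.eq]
  congr 1
  simp [Complex.star_def, Complex.conj_ofReal]

end TrNorm

section CQ
variable {X E : Type*} [Fintype X] [DecidableEq X] [Fintype E] [DecidableEq E]

lemma cqProj_eq_diagonal (S : Finset X) :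
    cqProj (E := E) S = diagonal (fun q : X × E => if q.1 ∈ S then (1 : ℂ) else 0) := by
  ext ⟨a, b⟩ ⟨c, d⟩
  simp only [cqProj, Matrix.sum_apply, kroneckerMap_apply, single_apply, of_apply,
    one_apply, diagonal_apply, Prod.mk.injEq]
  by_cases hac : a = c
  · subst hac
    by_cases hbd : b = d
    · subst hbd
      simp [Finset.sum_ite_eq, ite_and]
    · simp [hbd, ite_and]
  · simp [hac, ite_and]

lemma cqProj_star (S : Finset X) : star (cqProj (E := E) S) = cqProj (E := E) S := by
  rw [cqProj_eq_diagonal, Matrix.star_eq_conjTranspose, diagonal_conjTranspose]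
  simp [Pi.star_def, apply_ite]

lemma cqProj_idem (S : Finset X) :
    cqProj (E := E) S * cqProj (E := E) S = cqProj (E := E) S := by
  have hfun : (fun i : X × E => (if i.1 ∈ S then (1 : ℂ) else 0)
      * (if i.1 ∈ S then (1 : ℂ) else 0))
      = fun q : X × E => if q.1 ∈ S then (1 : ℂ) else 0 := by
    funext q
    split <;> simp
  rw [cqProj_eq_diagonal, diagonal_mul_diagonal, hfun]

lemma kron_conjTranspose (A : Matrix X X ℂ) (B : Matrix E E ℂ) :
    (A ⊗ₖ B)ᴴ = Aᴴ ⊗ₖ Bᴴ := by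
  ext ⟨a, b⟩ ⟨c, d⟩
  simp [conjTranspose_apply, kroneckerMap_apply, star_mul', mul_comm]

lemma stdBasis_herm (x : X) :
    (Matrix.single x x (1 : ℂ))ᴴ = Matrix.single x x 1 := by
  ext i j
  simp [conjTranspose_apply, single_apply, and_comm, apply_ite]

lemma posSemidef_real_smul' {c : ℝ} (hc : 0 ≤ c) {n : Type*} [Fintype n] [DecidableEq n]
    {M : Matrix n n ℂ} (hM : M.PosSemidef) : ((c : ℂ) • M).PosSemidef := by
  refine Matrix.PosSemidef.of_dotProduct_mulVec_nonneg ?_ fun v => ?_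
  · show ((c : ℂ) • M)ᴴ = _
    rw [conjTranspose_smul, hM.isHermitian.eq]
    congr 1
    simp [Complex.star_def, Complex.conj_ofReal]
  · rw [smul_mulVec, dotProduct_smul]
    exact smul_nonneg (Complex.zero_le_real.mpr hc) (hM.dotProduct_mulVec_nonneg v)

open scoped MatrixOrder in
lemma cqState_posSemidef {P : X → ℝ} (hP : ∀ x, 0 ≤ P x) {ω : X → Matrix E E ℂ}
    (hω : ∀ x, (ω x).PosSemidef) : (cqState P ω).PosSemidef := by
  rw [cqState]
  refine Finset.sum_induction _ _ (fun a b ha hb => ha.add hb) Matrix.PosSemidef.zero ?_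
  intro x _
  refine posSemidef_real_smul' (hP x) ?_
  obtain ⟨B, hB⟩ := CStarAlgebra.nonneg_iff_eq_star_mul_self.mp (hω x).nonneg
  have hE : Matrix.single x x (1 : ℂ)
      = (Matrix.single x x (1 : ℂ))ᴴ * Matrix.single x x 1 := by
    rw [stdBasis_herm, Matrix.single_mul_single_same, one_mul]
  rw [hB, Matrix.star_eq_conjTranspose, hE, Matrix.mul_kronecker_mul, ← kron_conjTranspose]
  exact Matrix.posSemidef_conjTranspose_mul_self _

end CQ


/-- For CQ states ρ, ρ* with normalized projections τ = p⁻¹ΠρΠ and τ* = p*⁻¹Πρ*Π,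
D(τ, τ*) ≤ 2 p⁻¹ D(ρ, ρ*); in particular, if D(ρ,ρ*) ≤ p ε²/4 then D(τ,τ*) ≤ ε²/2. -/
theorem projection_trace_distance
    {X E : Type*} [Fintype X] [DecidableEq X] [Fintype E] [DecidableEq E]
    (P Ps : X → ℝ) (hP : ∀ x, 0 ≤ P x) (hPs : ∀ x, 0 ≤ Ps x)
    (hP1 : ∑ x, P x = 1) (hPs1 : ∑ x, Ps x = 1)
    (ω ωs : X → Matrix E E ℂ)
    (hω : ∀ x, IsDensity (ω x)) (hωs : ∀ x, IsDensity (ωs x))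
    (S : Finset X) (p ps : ℝ)
    (hp : p = (cqProj (E := E) S * cqState P ω * cqProj (E := E) S).trace.re)
    (hps : ps = (cqProj (E := E) S * cqState Ps ωs * cqProj (E := E) S).trace.re)
    (hppos : 0 < p) (hpspos : 0 < ps)
    (τ τs : Matrix (X × E) (X × E) ℂ)
    (hτ : τ = (p : ℂ)⁻¹ • (cqProj (E := E) S * cqState P ω * cqProj (E := E) S))
    (hτs : τs = (ps : ℂ)⁻¹ • (cqProj (E := E) S * cqState Ps ωs * cqProj (E := E) S)) :
    traceDist τ τs ≤ 2 * p⁻¹ * traceDist (cqState P ω) (cqState Ps ωs) ∧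
    ∀ ε : ℝ, traceDist (cqState P ω) (cqState Ps ωs) ≤ p * ε ^ 2 / 4 →
      traceDist τ τs ≤ ε ^ 2 / 2 := by
  set Q : Matrix (X × E) (X × E) ℂ := cqProj (E := E) S with hQdef
  set ρ : Matrix (X × E) (X × E) ℂ := cqState P ω with hρdef
  set σ : Matrix (X × E) (X × E) ℂ := cqState Ps ωs with hσdef
  have hQs : star Q = Q := cqProj_star S
  have hQs' : Qᴴ = Q := by rw [← Matrix.star_eq_conjTranspose]; exact hQs
  have hQ2 : Q * Q = Q := cqProj_idem S
  have hρpsd : ρ.PosSemidef := cqState_posSemidef hP fun x => (hω x).1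
  have hσpsd : σ.PosSemidef := cqState_posSemidef hPs fun x => (hωs x).1
  have hΔ : (ρ - σ).IsHermitian := hρpsd.isHermitian.sub hσpsd.isHermitian
  have hQσQ : (Q * σ * Q).PosSemidef := by
    have := hσpsd.mul_mul_conjTranspose_same Q
    rwa [hQs'] at this
  set d : ℝ := trNorm (ρ - σ) with hd
  have hd0 : 0 ≤ d := trNorm_nonneg_of_hermitian hΔ
  have hps_eq : trNorm (Q * σ * Q) = ps := by rw [trNorm_of_posSemidef hQσQ, hps]
  have cyc : ∀ A : Matrix (X × E) (X × E) ℂ, (Q * A * Q).trace = (A * Q).trace := by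
    intro A
    rw [trace_mul_comm (Q * A) Q, ← Matrix.mul_assoc, hQ2, trace_mul_comm]
  have hdiff : |ps - p| ≤ d := by
    have h1 : ((ρ - σ) * Q).trace.re = p - ps := by
      rw [Matrix.sub_mul, trace_sub, Complex.sub_re, hp, hps, cyc ρ, cyc σ]
    have h2 := abs_trace_mul_le hΔ (contr_proj hQs hQ2)
    calc |ps - p| = |((ρ - σ) * Q).trace.re| := by rw [h1, abs_sub_comm]
      _ ≤ ‖((ρ - σ) * Q).trace‖ := Complex.abs_re_le_norm _
      _ ≤ d := h2
  have hdecomp : τ - τs = ((p⁻¹ : ℝ) : ℂ) • (Q * (ρ - σ) * Q)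
      + (((p⁻¹ - ps⁻¹ : ℝ)) : ℂ) • (Q * σ * Q) := by
    rw [hτ, hτs]
    push_cast
    rw [Matrix.mul_sub, Matrix.sub_mul, smul_sub, sub_smul]
    abel
  have hH1 : (((p⁻¹ : ℝ) : ℂ) • (Q * (ρ - σ) * Q)).IsHermitian :=
    hermitian_real_smul _ (isHermitian_proj_conj hΔ hQs)
  have hH2 : ((((p⁻¹ - ps⁻¹ : ℝ)) : ℂ) • (Q * σ * Q)).IsHermitian :=
    hermitian_real_smul _ (isHermitian_proj_conj hσpsd.isHermitian hQs)
  have htri : trNorm (τ - τs) ≤ p⁻¹ * d + |p⁻¹ - ps⁻¹| * ps := by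
    calc trNorm (τ - τs)
        ≤ trNorm (((p⁻¹ : ℝ) : ℂ) • (Q * (ρ - σ) * Q))
          + trNorm ((((p⁻¹ - ps⁻¹ : ℝ)) : ℂ) • (Q * σ * Q)) := by
          rw [hdecomp]; exact trNorm_add_le hH1 hH2
      _ = |p⁻¹| * trNorm (Q * (ρ - σ) * Q) + |p⁻¹ - ps⁻¹| * trNorm (Q * σ * Q) := by
          rw [trNorm_real_smul, trNorm_real_smul]
      _ ≤ p⁻¹ * d + |p⁻¹ - ps⁻¹| * ps := by
          rw [hps_eq, abs_of_pos (inv_pos.mpr hppos)]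
          have := trNorm_proj_conj_le hΔ hQs hQ2
          have hpinv : (0:ℝ) ≤ p⁻¹ := le_of_lt (inv_pos.mpr hppos)
          nlinarith
  have hbound2 : |p⁻¹ - ps⁻¹| * ps ≤ p⁻¹ * d := by
    have key : |p⁻¹ - ps⁻¹| = |ps - p| / (p * ps) := by
      rw [show p⁻¹ - ps⁻¹ = (ps - p) / (p * ps) by field_simp, abs_div,
        abs_of_pos (mul_pos hppos hpspos)]
    have heq : |p⁻¹ - ps⁻¹| * ps = |ps - p| / p := by
      rw [key]
      field_simp
    rw [heq, ← inv_mul_eq_div]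
    exact mul_le_mul_of_nonneg_left hdiff (le_of_lt (inv_pos.mpr hppos))
  have htd : traceDist τ τs = trNorm (τ - τs) / 2 := rfl
  have htd2 : traceDist ρ σ = d / 2 := rfl
  have hmain : traceDist τ τs ≤ 2 * p⁻¹ * traceDist ρ σ := by
    rw [htd, htd2]
    have hpinv : (0:ℝ) ≤ p⁻¹ := le_of_lt (inv_pos.mpr hppos)
    nlinarith
  refine ⟨hmain, fun ε hε => ?_⟩
  have h2 : 2 * p⁻¹ * traceDist ρ σ ≤ 2 * p⁻¹ * (p * ε ^ 2 / 4) := by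
    apply mul_le_mul_of_nonneg_left hε
    positivity
  have h3 : 2 * p⁻¹ * (p * ε ^ 2 / 4) = ε ^ 2 / 2 := by
    field_simp
    ring
  linarith
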